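/- The b-SEGA gradient estimator g = (d/b) I_S (∇f(x) − h) + h satisfies, for all x, h ∈ ℝ^d: E[‖g − ∇f(x*)‖²] ≤ (4dL/b) · D_f(x, x*) + 2(d/b − 1) ‖h − ∇f(x*)‖². -/

import Mathlib

open Finset
open scoped RealInnerProductSpace

/-- `maskE S a` is the vector `I_S a`: the coordinates of `a` in `S`, zero elsewhere. -/
def maskE {d : ℕ} (S : Finset (Fin d)) (a : EuclideanSpace ℝ (Fin d)) :
    EuclideanSpace ℝ (Fin d) := WithLp.toLp 2 (fun j => if j ∈ S then a j else 0)

lemma card_filter_mem {d b : ℕ} (hb1 : 1 ≤ b) (j : Fin d) :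
    (((Finset.univ : Finset (Fin d)).powersetCard b).filter (fun S => j ∈ S)).card
      = (d - 1).choose (b - 1) := by
  obtain ⟨m, rfl⟩ : ∃ m, b = m + 1 := ⟨b - 1, (Nat.succ_pred_eq_of_pos hb1).symm⟩
  have h1 : (univ : Finset (Fin d)) = insert j (univ.erase j) :=
    (insert_erase (mem_univ j)).symm
  rw [h1, powersetCard_succ_insert (notMem_erase j univ), filter_union]
  have h2 : ((univ.erase j).powersetCard (m+1)).filter (fun S => j ∈ S) = ∅ := by
    refine filter_eq_empty_iff.2 fun S hS hj => ?_
    exact (notMem_erase j univ) ((mem_powersetCard.1 hS).1 hj)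
  have h3 : (((univ.erase j).powersetCard m).image (insert j)).filter (fun S => j ∈ S)
      = ((univ.erase j).powersetCard m).image (insert j) := by
    refine filter_true_of_mem fun S hS => ?_
    obtain ⟨T, _, rfl⟩ := mem_image.1 hS
    exact mem_insert_self j T
  rw [h2, empty_union, h3]
  have hinj : Set.InjOn (insert j)
      ((((univ.erase j).powersetCard m : Finset (Finset (Fin d)))) : Set (Finset (Fin d))) := by
    intro T1 h1' T2 h2' heq
    have hj1 : j ∉ T1 := fun hj => (notMem_erase j univ) ((mem_powersetCard.1 h1').1 hj)
    have hj2 : j ∉ T2 := fun hj => (notMem_erase j univ) ((mem_powersetCard.1 h2').1 hj)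
    rw [← erase_insert hj1, ← erase_insert hj2, heq]
  rw [card_image_of_injOn hinj, card_powersetCard, card_erase_of_mem (mem_univ j), card_univ,
    Fintype.card_fin]
  simp

lemma choose_rel {d b : ℕ} (hb1 : 1 ≤ b) (hbd : b ≤ d) :
    (d : ℝ) * ((d - 1).choose (b - 1)) = (b : ℝ) * (d.choose b) := by
  have h := Nat.add_one_mul_choose_eq (d - 1) (b - 1)
  rw [Nat.sub_add_cancel (hb1.trans hbd), Nat.sub_add_cancel hb1] at h
  exact_mod_cast h.trans (mul_comm _ _)

lemma norm_sq_sum {d : ℕ} (u : EuclideanSpace ℝ (Fin d)) : ‖u‖ ^ 2 = ∑ j, (u j) ^ 2 := by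
  rw [EuclideanSpace.norm_eq, Real.sq_sqrt (by positivity)]
  simp [Real.norm_eq_abs, sq_abs]

lemma inner_sum' {d : ℕ} (u v : EuclideanSpace ℝ (Fin d)) : ⟪u, v⟫ = ∑ j, u j * v j := by
  simp [PiLp.inner_apply, RCLike.inner_apply, mul_comm]

lemma sum_ite_const {α : Type*} [DecidableEq α] (s : Finset α) (p : α → Prop) [DecidablePred p]
    (A B : ℝ) :
    ∑ x ∈ s, (if p x then A else B)
      = ((s.filter p).card : ℝ) * A + ((s.card : ℝ) - (s.filter p).card) * B := by
  rw [Finset.sum_ite]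
  simp only [sum_const, nsmul_eq_mul]
  have := Finset.card_filter_add_card_filter_not (s := s) (p := p)
  rw [show (s.filter fun x => ¬ p x).card = s.card - (s.filter p).card by omega]
  have hle : (s.filter p).card ≤ s.card := card_filter_le s p
  push_cast [hle]
  ring

set_option maxHeartbeats 1000000 in
theorem stmt_17
    {d b : ℕ} (hb1 : 1 ≤ b) (hbd : b ≤ d)
    (f : EuclideanSpace ℝ (Fin d) → ℝ)
    (f' : EuclideanSpace ℝ (Fin d) → EuclideanSpace ℝ (Fin d)) (L : ℝ)
    (hsmooth : ∀ x y, f y ≤ f x + ⟪f' x, y - x⟫ + L / 2 * ‖y - x‖ ^ 2)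
    (hconv : ∀ x y, f x + ⟪f' x, y - x⟫ ≤ f y)
    (xstar : EuclideanSpace ℝ (Fin d))
    (x h : EuclideanSpace ℝ (Fin d)) :
    ((d.choose b : ℝ))⁻¹ * ∑ S ∈ (Finset.univ : Finset (Fin d)).powersetCard b,
        ‖((d : ℝ) / b) • maskE S (f' x - h) + h - f' xstar‖ ^ 2
    ≤ 4 * d * L / b * (f x - f xstar - ⟪f' xstar, x - xstar⟫)
      + 2 * ((d : ℝ) / b - 1) * ‖h - f' xstar‖ ^ 2 := by
  have hd1 : 1 ≤ d := hb1.trans hbd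
  have hb0 : (0:ℝ) < b := by exact_mod_cast hb1
  have hd0 : (0:ℝ) < d := by exact_mod_cast hd1
  have hbd' : (b:ℝ) ≤ d := by exact_mod_cast hbd
  have hC : (0:ℝ) < (d.choose b : ℝ) := by exact_mod_cast Nat.choose_pos hbd
  set κ : ℝ := (d:ℝ)/b with hκ
  set v : EuclideanSpace ℝ (Fin d) := f' x - f' xstar with hv
  set e : EuclideanSpace ℝ (Fin d) := h - f' xstar with he
  set D : ℝ := f x - f xstar - ⟪f' xstar, x - xstar⟫ with hD
  -- Step 1: the expectation identity
  have hcard : ∀ j : Fin d,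
      (((((Finset.univ : Finset (Fin d)).powersetCard b).filter (fun S => j ∈ S)).card : ℝ))
        = (b:ℝ)/d * (d.choose b) := by
    intro j
    rw [card_filter_mem hb1 j]
    rw [div_mul_eq_mul_div, eq_div_iff (ne_of_gt hd0)]
    have := choose_rel hb1 hbd
    linarith
  have hLHS : ((d.choose b : ℝ))⁻¹ * ∑ S ∈ (Finset.univ : Finset (Fin d)).powersetCard b,
        ‖((d : ℝ) / b) • maskE S (f' x - h) + h - f' xstar‖ ^ 2
      = κ * ‖f' x - h‖^2 + 2 * ⟪f' x - h, e⟫ + ‖e‖^2 := by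
    have step : ∀ S ∈ (Finset.univ : Finset (Fin d)).powersetCard b,
        ‖((d : ℝ) / b) • maskE S (f' x - h) + h - f' xstar‖ ^ 2
          = ∑ j, (if j ∈ S then (κ * ((f' x - h) j) + e j)^2 else (e j)^2) := by
      intro S _
      rw [norm_sq_sum]
      refine Finset.sum_congr rfl fun j _ => ?_
      simp only [PiLp.add_apply, PiLp.sub_apply, PiLp.smul_apply, smul_eq_mul, maskE, hκ, he]
      split_ifs with hj <;> ring
    rw [Finset.sum_congr rfl step, Finset.sum_comm]
    have hj : ∀ j : Fin d,
        ∑ S ∈ (Finset.univ : Finset (Fin d)).powersetCard b,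
            (if j ∈ S then (κ * ((f' x - h) j) + e j)^2 else (e j)^2)
          = (b:ℝ)/d * (d.choose b) * (κ * ((f' x - h) j) + e j)^2
            + ((d.choose b : ℝ) - (b:ℝ)/d * (d.choose b)) * (e j)^2 := by
      intro j
      rw [sum_ite_const, hcard j, card_powersetCard, card_univ, Fintype.card_fin]
    rw [Finset.sum_congr rfl (fun j _ => hj j)]
    rw [norm_sq_sum (f' x - h), norm_sq_sum e, inner_sum']
    rw [Finset.mul_sum, Finset.mul_sum, Finset.mul_sum]
    rw [← Finset.sum_add_distrib, ← Finset.sum_add_distrib]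
    refine Finset.sum_congr rfl fun j _ => ?_
    have hCne : (d.choose b : ℝ) ≠ 0 := ne_of_gt hC
    have hbne : (b:ℝ) ≠ 0 := ne_of_gt hb0
    have hdne : (d:ℝ) ≠ 0 := ne_of_gt hd0
    rw [hκ]
    field_simp
    ring
  rw [hLHS]
  -- Step 2: smoothness/convexity consequences
  have key : ∀ t : ℝ, t * ‖v‖^2 - L/2 * t^2 * ‖v‖^2 ≤ D := by
    intro t
    set y : EuclideanSpace ℝ (Fin d) := x - t • v with hy
    have h1 := hconv xstar y
    have h2 := hsmooth x y
    have hyx : y - x = -(t • v) := sub_sub_cancel_left x (t • v)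
    have hyxs : y - xstar = (x - xstar) - t • v := sub_right_comm x (t • v) xstar
    have e1 : ⟪f' x, y - x⟫ = -(t * ⟪f' x, v⟫) := by
      rw [hyx, inner_neg_right, real_inner_smul_right]
    have e2 : ‖y - x‖^2 = t^2 * ‖v‖^2 := by
      rw [hyx, norm_neg, norm_smul, mul_pow, Real.norm_eq_abs, sq_abs]
    have e3 : ⟪f' xstar, y - xstar⟫ = ⟪f' xstar, x - xstar⟫ - t * ⟪f' xstar, v⟫ := by
      rw [hyxs, inner_sub_right, real_inner_smul_right]
    have e4 : ‖v‖^2 = ⟪f' x, v⟫ - ⟪f' xstar, v⟫ := by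
      rw [← real_inner_self_eq_norm_sq, hv, inner_sub_left]
    rw [e1, e2] at h2
    rw [e3] at h1
    have e5 : t * ‖v‖^2 = t * ⟪f' x, v⟫ - t * ⟪f' xstar, v⟫ := by linear_combination t * e4
    linarith [h1, h2, e5]
  have hDnn : 0 ≤ D := by have := key 0; simpa using this
  have hL : 0 ≤ L := by
    set u : EuclideanSpace ℝ (Fin d) := EuclideanSpace.single (⟨0, hd1⟩ : Fin d) (1:ℝ) with hu
    have hnu : ‖u‖ = 1 := by rw [hu, EuclideanSpace.norm_single]; norm_num
    have h1 := hconv x (x + u)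
    have h2 := hsmooth x (x + u)
    rw [add_sub_cancel_left] at h1 h2
    rw [hnu] at h2
    nlinarith [h1, h2]
  have hV2 : ‖v‖^2 ≤ 2 * L * D := by
    rcases eq_or_lt_of_le hL with hL0 | hLpos
    · have hV0 : ‖v‖^2 ≤ 0 := by
        by_contra hV
        push_neg at hV
        have := key ((D + 1) / ‖v‖^2)
        rw [← hL0] at this
        rw [div_mul_cancel₀ _ (ne_of_gt hV)] at this
        simp at this
        linarith
      rw [← hL0]
      nlinarith
    · have hk := key (1/L)
      have hLne : L ≠ 0 := ne_of_gt hLpos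
      have hsimp : (1/L) * ‖v‖^2 - L/2 * (1/L)^2 * ‖v‖^2 = ‖v‖^2 / (2*L) := by
        field_simp
        ring
      rw [hsimp] at hk
      have := (div_le_iff₀ (by positivity : (0:ℝ) < 2*L)).1 hk
      linarith
  -- Step 3: final scalar inequality
  have hae : f' x - h = v - e := by rw [hv, he]; abel
  have heq1 : ‖f' x - h‖^2 = ‖v‖^2 - 2*⟪v,e⟫ + ‖e‖^2 := by rw [hae, norm_sub_sq_real]
  have heq2 : ⟪f' x - h, e⟫ = ⟪v,e⟫ - ‖e‖^2 := by
    rw [hae, inner_sub_left, real_inner_self_eq_norm_sq]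
  rw [heq1, heq2]
  have hVE : 0 ≤ ‖v‖^2 + 2 * ⟪v, e⟫ + ‖e‖^2 := by
    have := sq_nonneg ‖v + e‖
    rw [norm_add_sq_real] at this
    linarith
  have hκ1 : 1 ≤ κ := by rw [hκ, le_div_iff₀ hb0]; linarith
  have hV0 : 0 ≤ ‖v‖^2 := sq_nonneg _
  have hE0 : 0 ≤ ‖e‖^2 := sq_nonneg _
  have hgoal : 4 * (d:ℝ) * L / b = 2 * κ * (2 * L) := by rw [hκ]; ring
  rw [hgoal]
  nlinarith [mul_nonneg (sub_nonneg.2 hκ1) hVE,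
    mul_le_mul_of_nonneg_left hV2 (by positivity : (0:ℝ) ≤ 2 * κ), hDnn, hV0, hE0]
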